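/- For every real number α, the following combined integral identity holds: ∫_{r_i}^{r_o} [ (r/(N² + r²))·|(r G(r))'|² + (k²/r)·|r G(r)|² − (Q'(r)·(U(r) − α)/|U(r) − c|²)·|r G(r)|² ] dr = 0, where (r G(r))' = G(r) + r G'(r). -/

import Mathlib

open Complex ComplexConjugate

lemma aux_pt (k q u xr a α : ℝ) (g f' : ℂ) (c : ℂ) (hc : c.im ≠ 0) (hx : xr ≠ 0) :
    a * ‖f'‖ ^ 2 + (k ^ 2 / xr) * ‖((xr:ℂ) * g)‖ ^ 2
      - (q * (u - α) / ‖((u:ℂ) - c)‖ ^ 2) * ‖((xr:ℂ) * g)‖ ^ 2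
    = (((k:ℂ) ^ 2 * g - (q:ℂ) / ((u:ℂ) - c) * ((xr:ℂ) * g)) * conj ((xr:ℂ) * g)
        + (a:ℂ) * f' * conj f').re
      - ((α - c.re) / c.im) *
        (((k:ℂ) ^ 2 * g - (q:ℂ) / ((u:ℂ) - c) * ((xr:ℂ) * g)) * conj ((xr:ℂ) * g)
          + (a:ℂ) * f' * conj f').im := by
  set w : ℂ := (u:ℂ) - c with hw
  have hw0 : w ≠ 0 := by
    intro h
    apply hc
    have : w.im = 0 := by rw [h]; simp
    simpa [hw] using this
  have hnw : Complex.normSq w ≠ 0 := by simpa using hw0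
  have h0 : g * conj g = ((Complex.normSq g : ℝ) : ℂ) := Complex.mul_conj g
  have h2 : f' * conj f' = ((Complex.normSq f' : ℝ) : ℂ) := Complex.mul_conj f'
  have hkey : ((k:ℂ) ^ 2 * g - (q:ℂ) / w * ((xr:ℂ) * g)) * conj ((xr:ℂ) * g)
        + (a:ℂ) * f' * conj f'
      = ((k ^ 2 * xr * Complex.normSq g + a * Complex.normSq f' : ℝ) : ℂ)
        - ((q * (xr ^ 2 * Complex.normSq g) : ℝ) : ℂ) * w⁻¹ := by
    simp only [map_mul, Complex.conj_ofReal]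
    push_cast
    linear_combination ((k:ℂ)^2*(xr:ℂ) - (q:ℂ)*(xr:ℂ)^2/w) * h0 + (a:ℂ) * h2
  rw [hkey]
  have hre : (((k ^ 2 * xr * Complex.normSq g + a * Complex.normSq f' : ℝ) : ℂ)
        - ((q * (xr ^ 2 * Complex.normSq g) : ℝ) : ℂ) * w⁻¹).re
      = (k ^ 2 * xr * Complex.normSq g + a * Complex.normSq f')
        - (q * (xr ^ 2 * Complex.normSq g)) * ((u - c.re) / Complex.normSq w) := by
    simp only [Complex.sub_re, Complex.mul_re, Complex.inv_re, Complex.inv_im,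
      Complex.ofReal_re, Complex.ofReal_im, hw, Complex.sub_im]
    ring
  have him : (((k ^ 2 * xr * Complex.normSq g + a * Complex.normSq f' : ℝ) : ℂ)
        - ((q * (xr ^ 2 * Complex.normSq g) : ℝ) : ℂ) * w⁻¹).im
      = -(q * (xr ^ 2 * Complex.normSq g)) * (c.im / Complex.normSq w) := by
    simp only [Complex.sub_im, Complex.mul_im, Complex.inv_re, Complex.inv_im,
      Complex.ofReal_re, Complex.ofReal_im, hw, Complex.sub_re]
    ring
  rw [hre, him]
  have habs1 : ‖((xr:ℂ) * g)‖ ^ 2 = xr ^ 2 * Complex.normSq g := by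
    rw [Complex.sq_norm, Complex.normSq_mul, Complex.normSq_ofReal]; ring
  have habs2 : ‖f'‖ ^ 2 = Complex.normSq f' := Complex.sq_norm f'
  have habs3 : ‖w‖ ^ 2 = Complex.normSq w := Complex.sq_norm w
  rw [habs1, habs2, habs3]
  field_simp
  ring

open Real MeasureTheory

/-- Combined integral identity: for every real `α`, a suitable linear
combination of the real- and imaginary-part integral identities of the
Rayleigh-type equation vanishes. -/
theorem stmt_6
    (ri ro : ℝ) (hri : 0 < ri) (hio : ri < ro)
    (N k : ℝ) (hN : 0 ≤ N) (hk : 0 < k)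
    (c : ℂ) (hc : c.im ≠ 0)
    (U Q : ℝ → ℝ)
    (hU : ContDiffOn ℝ 2 U (Set.Icc ri ro))
    (hQ : ∀ r, Q r = -(r * deriv U r) / (N ^ 2 + r ^ 2))
    (G : ℝ → ℂ)
    (hG : ContDiffOn ℝ 2 G (Set.Icc ri ro))
    (hGi : G ri = 0) (hGo : G ro = 0)
    (heq : ∀ r ∈ Set.Icc ri ro,
      deriv (fun s : ℝ => ((s / (N ^ 2 + s ^ 2) : ℝ) : ℂ) *
          deriv (fun t : ℝ => (t : ℂ) * G t) s) r
        - (k : ℂ) ^ 2 * G r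
        + ((deriv Q r : ℝ) : ℂ) / ((U r : ℂ) - c) * ((r : ℂ) * G r) = 0) :
    ∀ α : ℝ,
      ∫ r in ri..ro,
        (r / (N ^ 2 + r ^ 2)) * ‖(deriv (fun t : ℝ => (t : ℂ) * G t) r)‖ ^ 2
          + (k ^ 2 / r) * ‖((r : ℂ) * G r)‖ ^ 2
          - (deriv Q r * (U r - α) / ‖((U r : ℂ) - c)‖ ^ 2)
              * ‖((r : ℂ) * G r)‖ ^ 2 = 0 := by
  intro α
  set s : Set ℝ := Set.Icc ri ro with hs_def
  have hs : UniqueDiffOn ℝ s := uniqueDiffOn_Icc hio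
  set F : ℝ → ℂ := fun t : ℝ => (t : ℂ) * G t with hF_def
  have hFc : ContDiffOn ℝ 2 F s :=
    (Complex.ofRealCLM.contDiff.contDiffOn (n := 2)).mul hG
  set F' : ℝ → ℂ := derivWithin F s with hF'_def
  have hF'cd : ContDiffOn ℝ 1 F' s := hFc.derivWithin hs (by norm_num)
  -- the coefficient function
  set A : ℝ → ℂ := fun r : ℝ => ((r / (N ^ 2 + r ^ 2) : ℝ) : ℂ) with hA_def
  have hden : ∀ r ∈ s, N ^ 2 + r ^ 2 ≠ 0 := by
    intro r hr
    have h1 : 0 < r := lt_of_lt_of_le hri hr.1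
    positivity
  have hA : ContDiffOn ℝ 1 A s := by
    apply (Complex.ofRealCLM.contDiff.comp_contDiffOn (n := 1))
    exact ContDiffOn.div contDiffOn_id
      (contDiffOn_const.add (contDiffOn_id.pow 2)) hden
  set Ht : ℝ → ℂ := fun r => A r * F' r with hHt_def
  have hHt : ContDiffOn ℝ 1 Ht s := hA.mul hF'cd
  set H'' : ℝ → ℂ := derivWithin Ht s with hH''_def
  have hH''c : ContinuousOn H'' s :=
    (hHt.derivWithin (m := 0) hs (by norm_num)).continuousOn
  -- interior derivative facts
  have hFd : ∀ x ∈ Set.Ioo ri ro, HasDerivAt F (F' x) x := by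
    intro x hx
    have hnx : s ∈ nhds x := Icc_mem_nhds hx.1 hx.2
    have h1 : DifferentiableAt ℝ F x :=
      ((hFc.differentiableOn (by norm_num)) x (Set.Ioo_subset_Icc_self hx)).differentiableAt hnx
    have h2 : F' x = deriv F x := derivWithin_of_mem_nhds hnx
    rw [h2]; exact h1.hasDerivAt
  have hHtd : ∀ x ∈ Set.Ioo ri ro, HasDerivAt Ht (H'' x) x := by
    intro x hx
    have hnx : s ∈ nhds x := Icc_mem_nhds hx.1 hx.2
    have h1 : DifferentiableAt ℝ Ht x :=
      ((hHt.differentiableOn (by norm_num)) x (Set.Ioo_subset_Icc_self hx)).differentiableAt hnx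
    have h2 : H'' x = deriv Ht x := derivWithin_of_mem_nhds hnx
    rw [h2]; exact h1.hasDerivAt
  -- identify the equation's derivative with H''
  have hkey : ∀ x ∈ Set.Ioo ri ro,
      H'' x = (k : ℂ) ^ 2 * G x - ((deriv Q x : ℝ) : ℂ) / ((U x : ℂ) - c) * F x := by
    intro x hx
    have hnx : s ∈ nhds x := Icc_mem_nhds hx.1 hx.2
    have hEE : (fun r : ℝ => A r * deriv F r) =ᶠ[nhds x] Ht := by
      filter_upwards [Ioo_mem_nhds hx.1 hx.2] with y hy
      have : F' y = deriv F y := derivWithin_of_mem_nhds (Icc_mem_nhds hy.1 hy.2)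
      simp [hHt_def, this]
    have hd1 : deriv (fun r : ℝ => A r * deriv F r) x = deriv Ht x := hEE.deriv_eq
    have hd2 : H'' x = deriv Ht x := derivWithin_of_mem_nhds hnx
    have := heq x (Set.Ioo_subset_Icc_self hx)
    rw [show (fun s : ℝ => ((s / (N ^ 2 + s ^ 2) : ℝ) : ℂ) *
          deriv (fun t : ℝ => (t : ℂ) * G t) s) = (fun r : ℝ => A r * deriv F r) from rfl] at this
    rw [hd1, ← hd2] at this
    linear_combination this
  -- integration by parts / FTC
  set p' : ℝ → ℂ := fun x => H'' x * (starRingEnd ℂ) (F x) + Ht x * (starRingEnd ℂ) (F' x)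
    with hp'_def
  have hp'cont : ContinuousOn p' s := by
    apply ContinuousOn.add
    · exact hH''c.mul (Complex.continuous_conj.comp_continuousOn hFc.continuousOn)
    · exact hHt.continuousOn.mul (Complex.continuous_conj.comp_continuousOn hF'cd.continuousOn)
  have hp'int : IntervalIntegrable p' volume ri ro := by
    apply ContinuousOn.intervalIntegrable
    rwa [Set.uIcc_of_le hio.le]
  have hPd : ∀ x ∈ Set.Ioo ri ro,
      HasDerivAt (fun r => Ht r * (starRingEnd ℂ) (F r)) (p' x) x := by
    intro x hx
    exact (hHtd x hx).mul ((hFd x hx).star)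
  have hPc : ContinuousOn (fun r => Ht r * (starRingEnd ℂ) (F r)) s :=
    hHt.continuousOn.mul (Complex.continuous_conj.comp_continuousOn hFc.continuousOn)
  have hFTC : ∫ x in ri..ro, p' x = 0 := by
    rw [intervalIntegral.integral_eq_sub_of_hasDerivAt_of_le hio.le hPc hPd hp'int]
    simp [hF_def, hGi, hGo]
  have hre : ∫ x in ri..ro, (p' x).re = 0 := by
    have := Complex.reCLM.intervalIntegral_comp_comm hp'int
    rw [hFTC] at this
    simpa using this
  have him : ∫ x in ri..ro, (p' x).im = 0 := by
    have := Complex.imCLM.intervalIntegral_comp_comm hp'int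
    rw [hFTC] at this
    simpa using this
  -- identify the goal integrand with re - β·im of p' a.e.
  have hro_ae : ∀ᵐ x : ℝ, x ≠ ro := by
    refine MeasureTheory.ae_iff.2 ?_
    simpa using Real.volume_singleton
  have hcongr : ∫ r in ri..ro,
        ((r / (N ^ 2 + r ^ 2)) * ‖(deriv F r)‖ ^ 2
          + (k ^ 2 / r) * ‖((r : ℂ) * G r)‖ ^ 2
          - (deriv Q r * (U r - α) / ‖((U r : ℂ) - c)‖ ^ 2)
              * ‖((r : ℂ) * G r)‖ ^ 2)
      = ∫ x in ri..ro, ((p' x).re - ((α - c.re) / c.im) * (p' x).im) := by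
    apply intervalIntegral.integral_congr_ae
    filter_upwards [hro_ae] with x hxne hxI
    rw [Set.uIoc_of_le hio.le] at hxI
    have hx : x ∈ Set.Ioo ri ro := ⟨hxI.1, lt_of_le_of_ne hxI.2 hxne⟩
    have hx0 : x ≠ 0 := (lt_trans hri hx.1).ne'
    have hF'x : deriv F x = F' x := (derivWithin_of_mem_nhds (Icc_mem_nhds hx.1 hx.2)).symm
    have hp'x : p' x = ((k:ℂ) ^ 2 * G x - ((deriv Q x : ℝ):ℂ) / ((U x:ℂ) - c) * ((x:ℂ) * G x))
          * (starRingEnd ℂ) ((x:ℂ) * G x)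
        + ((x / (N ^ 2 + x ^ 2) : ℝ) : ℂ) * F' x * (starRingEnd ℂ) (F' x) := by
      rw [hp'_def]
      simp only
      rw [hkey x hx]
    rw [hp'x, hF'x]
    exact aux_pt k (deriv Q x) (U x) x (x / (N ^ 2 + x ^ 2)) α (G x) (F' x) c hc hx0
  rw [hcongr]
  rw [intervalIntegral.integral_sub, hre]
  · rw [intervalIntegral.integral_const_mul, him]
    ring
  · apply ContinuousOn.intervalIntegrable
    rw [Set.uIcc_of_le hio.le]
    exact Complex.continuous_re.comp_continuousOn hp'cont
  · apply IntervalIntegrable.const_mul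
    apply ContinuousOn.intervalIntegrable
    rw [Set.uIcc_of_le hio.le]
    exact Complex.continuous_im.comp_continuousOn hp'cont
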